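/- arXiv:2506.20012 — 2 statements merged into one kernel-verified Lean document; each statement's English description precedes it below -/
import Mathlib

section
/- Let Ψ_N ∈ H¹(ℝ^{Nd}) with |Ψ_N|² = ρ_N a probability density, and for n < N define the marginal density ρ_{N,n}(x₁ⁿ) = ∫ ρ_N(x₁ⁿ, x_{n+1}^N) dx_{n+1}^N and the marginal osmotic velocity u_{N,n}(x₁ⁿ) = (1/ρ_{N,n}) ∫ [u_N]₁ⁿ ρ_N dx_{n+1}^N, where u_N = ∇ρ_N/(2ρ_N). Then ∫ |u_{N,n}|² ρ_{N,n} dx₁ⁿ ≤ ∫ |∇Ψ_N|² dx^N. -/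
open MeasureTheory

noncomputable section

/-- For an `N = n + m` particle wave function `Ψ ∈ H¹(ℝ^{Nd})`
with density `ρN = |Ψ|²`, osmotic velocity `uN = ∇ρN/(2ρN)`, marginal density
`ρmar(x₁ⁿ) = ∫ ρN dx_{n+1}^N` and marginal osmotic velocity
`umar = (1/ρmar) ∫ [uN]₁ⁿ ρN dx_{n+1}^N`, one has
`∫ |umar|² ρmar dx₁ⁿ ≤ ∫ |∇Ψ|² dx^N`. -/
theorem marginal_osmotic_energy_bound (d n m : ℕ)
    (Ψ : (Fin n → EuclideanSpace ℝ (Fin d)) × (Fin m → EuclideanSpace ℝ (Fin d)) → ℂ)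
    (hΨdiff : Differentiable ℝ Ψ)
    (hΨL2 : MemLp Ψ 2 volume)
    (ρN : (Fin n → EuclideanSpace ℝ (Fin d)) × (Fin m → EuclideanSpace ℝ (Fin d)) → ℝ)
    (hρN : ∀ x, ρN x = ‖Ψ x‖ ^ 2)
    (hprob : ∫ x, ρN x = 1)
    (gradSq : (Fin n → EuclideanSpace ℝ (Fin d)) × (Fin m → EuclideanSpace ℝ (Fin d)) → ℝ)
    (hgradSq : ∀ x, gradSq x =
      (∑ i : Fin n, ∑ k : Fin d,
        ‖fderiv ℝ Ψ x (Pi.single i (EuclideanSpace.single k 1), 0)‖ ^ 2) +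
      (∑ j : Fin m, ∑ k : Fin d,
        ‖fderiv ℝ Ψ x (0, Pi.single j (EuclideanSpace.single k 1))‖ ^ 2))
    (hgradInt : Integrable gradSq volume)
    (uN : (Fin n → EuclideanSpace ℝ (Fin d)) × (Fin m → EuclideanSpace ℝ (Fin d)) →
      Fin n → EuclideanSpace ℝ (Fin d))
    (huN : ∀ x (i : Fin n) (k : Fin d), uN x i k =
      if ρN x = 0 then 0
      else fderiv ℝ ρN x (Pi.single i (EuclideanSpace.single k 1), 0) / (2 * ρN x))
    (ρmar : (Fin n → EuclideanSpace ℝ (Fin d)) → ℝ)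
    (hρmar : ∀ y, ρmar y = ∫ z, ρN (y, z))
    (umar : (Fin n → EuclideanSpace ℝ (Fin d)) → Fin n → EuclideanSpace ℝ (Fin d))
    (humar : ∀ y, umar y =
      if ρmar y = 0 then 0 else (ρmar y)⁻¹ • ∫ z, ρN (y, z) • uN (y, z)) :
    (∫ y, (∑ i : Fin n, ‖umar y i‖ ^ 2) * ρmar y) ≤ ∫ x, gradSq x := by
  classical
  have hρNfun : ρN = fun x => ‖Ψ x‖ ^ 2 := funext hρN
  have hρNnonneg : ∀ x, 0 ≤ ρN x := fun x => by rw [hρN]; positivity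
  have hρNmeas : Measurable ρN := by
    rw [hρNfun]; exact (hΨdiff.continuous.norm.pow 2).measurable
  have hρNint : Integrable ρN := by
    rw [hρNfun]
    have := hΨL2.integrable_norm_rpow two_ne_zero ENNReal.ofNat_ne_top
    simpa [ENNReal.toReal_ofNat, Real.rpow_natCast] using this
  -- pointwise key inequality
  have key : ∀ x (i : Fin n) (k : Fin d),
      (uN x i k) ^ 2 * ρN x ≤
        ‖fderiv ℝ Ψ x (Pi.single i (EuclideanSpace.single k 1), 0)‖ ^ 2 := by
    intro x i k
    by_cases h0 : ρN x = 0
    · rw [h0, mul_zero]; positivity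
    · have hρpos : 0 < ρN x := lt_of_le_of_ne (hρNnonneg x) (Ne.symm h0)
      set v : (Fin n → EuclideanSpace ℝ (Fin d)) × (Fin m → EuclideanSpace ℝ (Fin d)) :=
        (Pi.single i (EuclideanSpace.single k 1), 0) with hv
      have hd : HasFDerivAt ρN (2 • (innerSL ℝ (Ψ x)).comp (fderiv ℝ Ψ x)) x := by
        rw [hρNfun]; exact (hΨdiff x).hasFDerivAt.norm_sq
      have hfd : fderiv ℝ ρN x v = 2 * (inner ℝ (Ψ x) (fderiv ℝ Ψ x v) : ℝ) := by
        rw [hd.fderiv]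
        simp [two_smul, two_mul]
      set a : ℝ := (inner ℝ (Ψ x) (fderiv ℝ Ψ x v) : ℝ) with ha
      have hCS : |a| ≤ ‖Ψ x‖ * ‖fderiv ℝ Ψ x v‖ := abs_real_inner_le_norm _ _
      have ha2 : a ^ 2 ≤ ρN x * ‖fderiv ℝ Ψ x v‖ ^ 2 := by
        rw [hρN x]
        nlinarith [abs_nonneg a, sq_abs a, norm_nonneg (Ψ x), norm_nonneg (fderiv ℝ Ψ x v)]
      rw [huN x i k, if_neg h0, ← hv, hfd, mul_div_mul_left _ _ (two_ne_zero), div_pow,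
        div_mul_eq_mul_div, div_le_iff₀ (by positivity)]
      nlinarith [mul_le_mul_of_nonneg_right ha2 hρpos.le]
  -- measurability of uN
  have humeask : ∀ (i : Fin n) (k : Fin d), Measurable fun x => uN x i k := by
    intro i k
    have h1 : Measurable fun x =>
        fderiv ℝ ρN x (Pi.single i (EuclideanSpace.single k 1), 0) :=
      measurable_fderiv_apply_const ℝ ρN _
    have h2 : (fun x => uN x i k) = fun x =>
        if ρN x = 0 then 0
        else fderiv ℝ ρN x (Pi.single i (EuclideanSpace.single k 1), 0) / (2 * ρN x) :=
      funext fun x => huN x i k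
    rw [h2]
    exact Measurable.ite (hρNmeas (measurableSet_singleton 0)) measurable_const
      (h1.div (measurable_const.mul hρNmeas))
  have huNmeas : Measurable uN :=
    measurable_pi_lambda _ fun i => (MeasurableEquiv.toLp 2 (Fin d → ℝ)).measurable.comp
      (measurable_pi_lambda _ fun k => humeask i k)
  have hnormsq : ∀ (w : EuclideanSpace ℝ (Fin d)), ‖w‖ ^ 2 = ∑ k, (w k) ^ 2 := by
    intro w
    rw [EuclideanSpace.norm_eq, Real.sq_sqrt (by positivity)]
    simp [sq_abs]
  set H : (Fin n → EuclideanSpace ℝ (Fin d)) × (Fin m → EuclideanSpace ℝ (Fin d)) → ℝ :=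
    fun x => (∑ i, ‖uN x i‖ ^ 2) * ρN x with hHdef
  have hHnonneg : ∀ x, 0 ≤ H x := fun x =>
    mul_nonneg (Finset.sum_nonneg fun i _ => sq_nonneg _) (hρNnonneg x)
  have hHle : ∀ x, H x ≤ gradSq x := by
    intro x
    have hHx : H x = ∑ i, ∑ k, (uN x i k) ^ 2 * ρN x := by
      simp only [hHdef, Finset.sum_mul, hnormsq]
    rw [hHx, hgradSq x]
    have h1 : ∑ i, ∑ k, (uN x i k) ^ 2 * ρN x ≤
        ∑ i : Fin n, ∑ k : Fin d,
          ‖fderiv ℝ Ψ x (Pi.single i (EuclideanSpace.single k 1), 0)‖ ^ 2 :=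
      Finset.sum_le_sum fun i _ => Finset.sum_le_sum fun k _ => key x i k
    have h2 : (0:ℝ) ≤ ∑ j : Fin m, ∑ k : Fin d,
        ‖fderiv ℝ Ψ x (0, Pi.single j (EuclideanSpace.single k 1))‖ ^ 2 := by positivity
    linarith
  have hHmeas : Measurable H := by
    refine Measurable.mul ?_ hρNmeas
    exact Finset.measurable_sum _ fun i _ =>
      ((measurable_pi_apply i).comp huNmeas).norm.pow_const 2
  have hHint : Integrable H :=
    hgradInt.mono' hHmeas.aestronglyMeasurable
      (ae_of_all _ fun x => by rw [Real.norm_of_nonneg (hHnonneg x)]; exact hHle x)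
  -- Fubini preliminaries
  have hvol : (volume : Measure ((Fin n → EuclideanSpace ℝ (Fin d)) ×
      (Fin m → EuclideanSpace ℝ (Fin d)))) = (volume).prod volume := Measure.volume_eq_prod ..
  have hρae : ∀ᵐ y, Integrable fun z => ρN (y, z) := by
    have h := hρNint; rw [hvol] at h; exact h.prod_right_ae
  have hHae : ∀ᵐ y, Integrable fun z => H (y, z) := by
    have h := hHint; rw [hvol] at h; exact h.prod_right_ae
  -- main fiberwise bound
  have main : ∀ᵐ y, (∑ i, ‖umar y i‖ ^ 2) * ρmar y ≤ ∫ z, H (y, z) := by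
    filter_upwards [hρae, hHae] with y hρy hHy
    by_cases h0 : ρmar y = 0
    · rw [h0, mul_zero]; exact integral_nonneg fun z => hHnonneg _
    · have hapos : 0 < ρmar y :=
        lt_of_le_of_ne (by rw [hρmar y]; exact integral_nonneg fun z => hρNnonneg _)
          (Ne.symm h0)
      have hρfibmeas : Measurable fun z => ρN (y, z) := hρNmeas.comp measurable_prodMk_left
      have hvmeas : ∀ i : Fin n, Measurable fun z => uN (y, z) i := fun i =>
        (measurable_pi_apply i).comp (huNmeas.comp measurable_prodMk_left)
      have hvi2 : ∀ i : Fin n, Integrable fun z => ρN (y, z) * ‖uN (y, z) i‖ ^ 2 := by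
        intro i
        refine hHy.mono' (hρfibmeas.mul ((hvmeas i).norm.pow_const 2)).aestronglyMeasurable
          (ae_of_all _ fun z => ?_)
        rw [Real.norm_of_nonneg (mul_nonneg (hρNnonneg _) (sq_nonneg _))]
        have hs : ‖uN (y, z) i‖ ^ 2 ≤ ∑ j, ‖uN (y, z) j‖ ^ 2 :=
          Finset.single_le_sum (f := fun j => ‖uN (y, z) j‖ ^ 2)
            (fun j _ => sq_nonneg _) (Finset.mem_univ i)
        calc ρN (y, z) * ‖uN (y, z) i‖ ^ 2 = ‖uN (y, z) i‖ ^ 2 * ρN (y, z) := mul_comm _ _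
          _ ≤ (∑ j, ‖uN (y, z) j‖ ^ 2) * ρN (y, z) :=
              mul_le_mul_of_nonneg_right hs (hρNnonneg _)
      have hvi1 : ∀ i : Fin n, Integrable fun z => ρN (y, z) * ‖uN (y, z) i‖ := by
        intro i
        refine (hρy.add (hvi2 i)).mono'
          (hρfibmeas.mul (hvmeas i).norm).aestronglyMeasurable (ae_of_all _ fun z => ?_)
        rw [Real.norm_of_nonneg (mul_nonneg (hρNnonneg _) (norm_nonneg _))]
        simp only [Pi.add_apply]
        nlinarith [hρNnonneg (y, z), norm_nonneg (uN (y, z) i),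
          sq_nonneg (1 - ‖uN (y, z) i‖), mul_nonneg (hρNnonneg (y, z))
            (sq_nonneg (1 - ‖uN (y, z) i‖))]
      have hPi : Integrable fun z => ρN (y, z) • uN (y, z) := by
        refine (integrable_finset_sum Finset.univ fun i _ => hvi1 i).mono'
          ?_ (ae_of_all _ fun z => ?_)
        · exact (hρfibmeas.smul (huNmeas.comp measurable_prodMk_left)).aestronglyMeasurable
        · refine (pi_norm_le_iff_of_nonneg (Finset.sum_nonneg fun i _ =>
            mul_nonneg (hρNnonneg _) (norm_nonneg _))).2 fun i => ?_
          have he : ‖(ρN (y, z) • uN (y, z)) i‖ = ρN (y, z) * ‖uN (y, z) i‖ := by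
            simp [Pi.smul_apply, norm_smul, abs_of_nonneg (hρNnonneg (y, z))]
          rw [he]
          exact Finset.single_le_sum
            (fun j _ => mul_nonneg (hρNnonneg _) (norm_nonneg _)) (Finset.mem_univ i)
      have hIi : ∀ i : Fin n, (∫ z, ρN (y, z) • uN (y, z)) i = ∫ z, ρN (y, z) • uN (y, z) i := by
        intro i
        have h := (ContinuousLinearMap.proj (R := ℝ)
          (φ := fun _ : Fin n => EuclideanSpace ℝ (Fin d)) i).integral_comp_comm hPi
        simpa using h.symm
      have hterm : ∀ i : Fin n,
          ‖umar y i‖ ^ 2 * ρmar y ≤ ∫ z, ρN (y, z) * ‖uN (y, z) i‖ ^ 2 := by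
        intro i
        set c : ℝ := ∫ z, ρN (y, z) * ‖uN (y, z) i‖ with hc
        set b : ℝ := ∫ z, ρN (y, z) * ‖uN (y, z) i‖ ^ 2 with hb
        have hcs : c ^ 2 ≤ ρmar y * b := by
          set t : ℝ := c / ρmar y with ht
          have hfun : (fun z => ρN (y, z) * (t - ‖uN (y, z) i‖) ^ 2)
              = fun z => (t ^ 2 * ρN (y, z) - 2 * t * (ρN (y, z) * ‖uN (y, z) i‖))
                + ρN (y, z) * ‖uN (y, z) i‖ ^ 2 := by
            funext z; ring
          have hint1 : Integrable (fun z =>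
              t ^ 2 * ρN (y, z) - 2 * t * (ρN (y, z) * ‖uN (y, z) i‖)) volume := by
            exact (hρy.const_mul _).sub ((hvi1 i).const_mul _)
          have hval : (∫ z, ((t ^ 2 * ρN (y, z) - 2 * t * (ρN (y, z) * ‖uN (y, z) i‖))
              + ρN (y, z) * ‖uN (y, z) i‖ ^ 2)) = t ^ 2 * ρmar y - 2 * t * c + b := by
            rw [integral_add hint1 (hvi2 i),
              integral_sub (hρy.const_mul _) ((hvi1 i).const_mul _),
              integral_const_mul, integral_const_mul, ← hρmar y, ← hc, ← hb]
          have h2 : 0 ≤ t ^ 2 * ρmar y - 2 * t * c + b := by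
            calc (0:ℝ) ≤ ∫ z, ρN (y, z) * (t - ‖uN (y, z) i‖) ^ 2 :=
                  integral_nonneg fun z => mul_nonneg (hρNnonneg _) (sq_nonneg _)
              _ = _ := by rw [hfun, hval]
          have h3 : 0 ≤ (t ^ 2 * ρmar y - 2 * t * c + b) * ρmar y :=
            mul_nonneg h2 hapos.le
          have h4 : (t ^ 2 * ρmar y - 2 * t * c + b) * ρmar y
              = ρmar y * b - c ^ 2 := by
            rw [ht]; field_simp; ring
          linarith [h4 ▸ h3]
        have hcnn : 0 ≤ c := integral_nonneg fun z => mul_nonneg (hρNnonneg _) (norm_nonneg _)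
        have hIle : ‖(∫ z, ρN (y, z) • uN (y, z)) i‖ ≤ c := by
          rw [hIi i, hc]
          refine (norm_integral_le_integral_norm _).trans_eq
            (integral_congr_ae (ae_of_all _ fun z => ?_))
          simp only [norm_smul, Real.norm_eq_abs, abs_of_nonneg (hρNnonneg (y, z))]
        have humy : ‖umar y i‖ ≤ (ρmar y)⁻¹ * c := by
          rw [humar y, if_neg h0, Pi.smul_apply, norm_smul,
            Real.norm_of_nonneg (inv_nonneg.2 hapos.le)]
          exact mul_le_mul_of_nonneg_left hIle (inv_nonneg.2 hapos.le)
        have hsq : ‖umar y i‖ ^ 2 * ρmar y ≤ ((ρmar y)⁻¹ * c) ^ 2 * ρmar y :=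
          mul_le_mul_of_nonneg_right
            (pow_le_pow_left₀ (norm_nonneg _) humy 2) hapos.le
        refine hsq.trans ?_
        have he : ((ρmar y)⁻¹ * c) ^ 2 * ρmar y = c ^ 2 / ρmar y := by
          field_simp
        rw [he, div_le_iff₀ hapos]
        exact hcs.trans_eq (mul_comm _ _)
      calc (∑ i, ‖umar y i‖ ^ 2) * ρmar y = ∑ i, ‖umar y i‖ ^ 2 * ρmar y :=
            Finset.sum_mul _ _ _
        _ ≤ ∑ i, ∫ z, ρN (y, z) * ‖uN (y, z) i‖ ^ 2 :=
            Finset.sum_le_sum fun i _ => hterm i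
        _ = ∫ z, ∑ i, ρN (y, z) * ‖uN (y, z) i‖ ^ 2 :=
            (integral_finset_sum _ fun i _ => hvi2 i).symm
        _ = ∫ z, H (y, z) := by
            refine congrArg _ (funext fun z => ?_)
            simp only [hHdef, ← Finset.mul_sum, mul_comm]
  -- assemble
  have hLHSnonneg : ∀ y, 0 ≤ (∑ i, ‖umar y i‖ ^ 2) * ρmar y := fun y =>
    mul_nonneg (Finset.sum_nonneg fun i _ => sq_nonneg _)
      (by rw [hρmar y]; exact integral_nonneg fun z => hρNnonneg _)
  have hHint' : Integrable H ((volume).prod volume) := hvol ▸ hHint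
  have hInner : Integrable fun y => ∫ z, H (y, z) := hHint'.integral_prod_left
  calc (∫ y, (∑ i, ‖umar y i‖ ^ 2) * ρmar y) ≤ ∫ y, ∫ z, H (y, z) :=
        integral_mono_of_nonneg (ae_of_all _ hLHSnonneg) hInner main
    _ = ∫ x, H x := by rw [hvol]; exact (integral_prod H hHint').symm
    _ ≤ ∫ x, gradSq x := integral_mono hHint hgradInt hHle
end
end

section
/- Let μ be a probability measure on C([0,T];ℝᵈ) (law of a continuous process X) with time marginals μ_t, and let 𝒟 : C([0,T];ℝᵈ) × [0,T] → ℝ be measurable with 𝔼∫₀ᵀ|𝒟(X,t)|²dt < ∞. Then there exists a measurable D : ℝᵈ × [0,T] → ℝ with ∫₀ᵀ∫|D(x,t)|²μ_t(dx)dt < ∞ such that for all bounded continuous f, ∫₀ᵀ∫D(x,t)f(x,t)μ_t(dx)dt = 𝔼∫₀ᵀ𝒟(X,t)f(X_t,t)dt, and moreover ∫₀ᵀ∫|D(x,t)|²μ_t(dx)dt ≤ 𝔼∫₀ᵀ|𝒟(X,t)|²dt, with equality iff 𝒟(·,t) = D(X_t,t) a.e. -/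
open MeasureTheory

set_option synthInstance.maxHeartbeats 1000000
set_option maxHeartbeats 4000000

noncomputable section

/-- Borel measurable structure on the path space `C([0,T]; ℝᵈ)`. -/
instance pathMeasurableSpace (d : ℕ) (T : ℝ) :
    MeasurableSpace C(Set.Icc (0:ℝ) T, EuclideanSpace ℝ (Fin d)) := borel _

/-- Evaluation of a path at time `t ∈ [0,T]` (via `projIcc`). -/
def pathEval (d : ℕ) (T : ℝ) (hT : 0 ≤ T)
    (ω : C(Set.Icc (0:ℝ) T, EuclideanSpace ℝ (Fin d))) (t : ℝ) :
    EuclideanSpace ℝ (Fin d) :=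
  ω (Set.projIcc 0 T hT t)

instance pathBorel (d : ℕ) (T : ℝ) :
    BorelSpace C(Set.Icc (0:ℝ) T, EuclideanSpace ℝ (Fin d)) := ⟨rfl⟩

instance pathPolish (d : ℕ) (T : ℝ) :
    PolishSpace C(Set.Icc (0:ℝ) T, EuclideanSpace ℝ (Fin d)) := inferInstance

instance prodStdBorel (d : ℕ) (T : ℝ) :
    StandardBorelSpace (ℝ × C(Set.Icc (0:ℝ) T, EuclideanSpace ℝ (Fin d))) := inferInstance

/-- Jensen/Cauchy–Schwarz inequality for a probability measure. -/
lemma sq_integral_le_integral_sq {Ω' : Type*} [MeasurableSpace Ω'] {κb : Measure Ω'}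
    [IsProbabilityMeasure κb] {g : Ω' → ℝ} (hg : AEStronglyMeasurable g κb)
    (h2 : Integrable (fun y => g y ^ 2) κb) :
    (∫ y, g y ∂κb) ^ 2 ≤ ∫ y, g y ^ 2 ∂κb := by
  have hL2 : MemLp g 2 κb := (memLp_two_iff_integrable_sq hg).2 h2
  have h1 : Integrable g κb := hL2.integrable one_le_two
  set c := ∫ y, g y ∂κb with hc
  have h0 : 0 ≤ ∫ y, (g y - c) ^ 2 ∂κb := integral_nonneg fun y => sq_nonneg _
  have hexp : ∫ y, (g y - c) ^ 2 ∂κb = (∫ y, g y ^ 2 ∂κb) - c ^ 2 := by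
    have heq : ∀ y, (g y - c) ^ 2 = (g y ^ 2 - 2 * c * g y) + c ^ 2 := fun y => by ring
    have hmul : Integrable (fun y => 2 * c * g y) κb := h1.const_mul (2 * c)
    have ha : Integrable (fun y => g y ^ 2 - 2 * c * g y) κb := h2.sub hmul
    simp_rw [heq]
    rw [integral_add ha (integrable_const _), integral_sub h2 hmul, integral_const_mul,
      integral_const]
    simp only [measure_univ, probReal_univ, smul_eq_mul, one_mul, ← hc]
    ring
  linarith

/-- Markovian projection.  For a probability measure `μ` on
`C([0,T];ℝᵈ)` and a measurable `𝒟` with `𝔼∫₀ᵀ|𝒟(X,t)|²dt < ∞`, there exists a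
measurable `D : ℝᵈ × [0,T] → ℝ`, square integrable against the time marginals,
such that `∫₀ᵀ∫ D f dμ_t dt = 𝔼∫₀ᵀ 𝒟(X,t) f(X_t,t) dt` for all bounded
continuous `f`, with `∫₀ᵀ∫|D|²dμ_t dt ≤ 𝔼∫₀ᵀ|𝒟|²dt`, and equality holds iff
`𝒟(·,t) = D(X_t,t)` a.e. -/
theorem markovian_projection (d : ℕ) (T : ℝ) (hT : 0 ≤ T)
    (μ : Measure C(Set.Icc (0:ℝ) T, EuclideanSpace ℝ (Fin d)))
    [IsProbabilityMeasure μ]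
    (𝒟 : C(Set.Icc (0:ℝ) T, EuclideanSpace ℝ (Fin d)) → ℝ → ℝ)
    (h𝒟meas : Measurable (Function.uncurry 𝒟))
    (h𝒟L2 : Integrable
      (fun p : ℝ × C(Set.Icc (0:ℝ) T, EuclideanSpace ℝ (Fin d)) => (𝒟 p.2 p.1) ^ 2)
      ((volume.restrict (Set.Ioc 0 T)).prod μ)) :
    ∃ D : EuclideanSpace ℝ (Fin d) → ℝ → ℝ,
      Measurable (Function.uncurry D) ∧
      Integrable
        (fun p : ℝ × C(Set.Icc (0:ℝ) T, EuclideanSpace ℝ (Fin d)) =>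
          (D (pathEval d T hT p.2 p.1) p.1) ^ 2)
        ((volume.restrict (Set.Ioc 0 T)).prod μ) ∧
      (∀ f : EuclideanSpace ℝ (Fin d) → ℝ → ℝ,
        Continuous (Function.uncurry f) → (∃ C, ∀ x t, |f x t| ≤ C) →
        (∫ p : ℝ × C(Set.Icc (0:ℝ) T, EuclideanSpace ℝ (Fin d)),
            D (pathEval d T hT p.2 p.1) p.1 * f (pathEval d T hT p.2 p.1) p.1
            ∂((volume.restrict (Set.Ioc 0 T)).prod μ))
          = ∫ p : ℝ × C(Set.Icc (0:ℝ) T, EuclideanSpace ℝ (Fin d)),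
              𝒟 p.2 p.1 * f (pathEval d T hT p.2 p.1) p.1
              ∂((volume.restrict (Set.Ioc 0 T)).prod μ)) ∧
      (∫ p : ℝ × C(Set.Icc (0:ℝ) T, EuclideanSpace ℝ (Fin d)),
          (D (pathEval d T hT p.2 p.1) p.1) ^ 2
          ∂((volume.restrict (Set.Ioc 0 T)).prod μ))
        ≤ ∫ p : ℝ × C(Set.Icc (0:ℝ) T, EuclideanSpace ℝ (Fin d)),
            (𝒟 p.2 p.1) ^ 2 ∂((volume.restrict (Set.Ioc 0 T)).prod μ) ∧
      ((∫ p : ℝ × C(Set.Icc (0:ℝ) T, EuclideanSpace ℝ (Fin d)),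
          (D (pathEval d T hT p.2 p.1) p.1) ^ 2
          ∂((volume.restrict (Set.Ioc 0 T)).prod μ))
        = (∫ p : ℝ × C(Set.Icc (0:ℝ) T, EuclideanSpace ℝ (Fin d)),
            (𝒟 p.2 p.1) ^ 2 ∂((volume.restrict (Set.Ioc 0 T)).prod μ))
        ↔ (∀ᵐ p ∂((volume.restrict (Set.Ioc 0 T)).prod μ),
            𝒟 p.2 p.1 = D (pathEval d T hT p.2 p.1) p.1)) := by
  classical
  set ν := ((volume.restrict (Set.Ioc (0:ℝ) T)).prod μ) with hν
  haveI : IsFiniteMeasure (volume.restrict (Set.Ioc (0:ℝ) T)) :=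
    ⟨by rw [Measure.restrict_apply_univ]; exact measure_Ioc_lt_top⟩
  haveI : IsFiniteMeasure ν := by rw [hν]; infer_instance
  set g : ℝ × C(Set.Icc (0:ℝ) T, EuclideanSpace ℝ (Fin d)) → ℝ :=
    fun p => 𝒟 p.2 p.1 with hgdef
  have hgmeas : Measurable g := h𝒟meas.comp measurable_swap
  set Ψ : ℝ × C(Set.Icc (0:ℝ) T, EuclideanSpace ℝ (Fin d)) →
      EuclideanSpace ℝ (Fin d) × ℝ :=
    fun p => (pathEval d T hT p.2 p.1, p.1) with hΨdef
  have hΨc : Continuous Ψ := by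
    have h1 : Continuous fun q : C(Set.Icc (0:ℝ) T, EuclideanSpace ℝ (Fin d)) ×
        Set.Icc (0:ℝ) T => q.1 q.2 := continuous_eval
    have h2 : Continuous fun p : ℝ × C(Set.Icc (0:ℝ) T, EuclideanSpace ℝ (Fin d)) =>
        ((p.2, Set.projIcc 0 T hT p.1) :
          C(Set.Icc (0:ℝ) T, EuclideanSpace ℝ (Fin d)) × Set.Icc (0:ℝ) T) :=
      continuous_snd.prodMk ((continuous_projIcc).comp continuous_fst)
    exact (h1.comp h2).prodMk continuous_fst
  have hΨ : Measurable Ψ := hΨc.measurable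
  have hm : MeasurableSpace.comap Ψ Prod.instMeasurableSpace ≤ Prod.instMeasurableSpace :=
    hΨ.comap_le
  haveI : SigmaFinite (ν.trim hm) := by infer_instance
  have hg2 : Integrable (fun p => g p ^ 2) ν := h𝒟L2
  have hgL2 : MemLp g 2 ν := (memLp_two_iff_integrable_sq hgmeas.aestronglyMeasurable).2 hg2
  have hgint : Integrable g ν := hgL2.integrable one_le_two
  haveI := prodStdBorel d T
  set κ : ProbabilityTheory.Kernel (EuclideanSpace ℝ (Fin d) × ℝ)
      (ℝ × C(Set.Icc (0:ℝ) T, EuclideanSpace ℝ (Fin d))) :=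
    ProbabilityTheory.condDistrib id Ψ ν with hκ
  haveI : ProbabilityTheory.IsMarkovKernel κ := by rw [hκ]; infer_instance
  set D : EuclideanSpace ℝ (Fin d) → ℝ → ℝ := fun x t => ∫ y, g y ∂(κ (x, t)) with hD
  set g' := ν[g|MeasurableSpace.comap Ψ Prod.instMeasurableSpace] with hg'def
  have hDmeas : Measurable (Function.uncurry D) := by
    have h1 : StronglyMeasurable fun z : (EuclideanSpace ℝ (Fin d) × ℝ) ×
        (ℝ × C(Set.Icc (0:ℝ) T, EuclideanSpace ℝ (Fin d))) => g z.2 :=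
      (hgmeas.comp measurable_snd).stronglyMeasurable
    exact h1.integral_kernel_prod_right'.measurable
  have hae : (fun p => D (pathEval d T hT p.2 p.1) p.1) =ᵐ[ν] g' :=
    (ProbabilityTheory.condExp_ae_eq_integral_condDistrib_id hΨ hgint).symm
  have hsmg' : StronglyMeasurable[MeasurableSpace.comap Ψ Prod.instMeasurableSpace] g' :=
    stronglyMeasurable_condExp
  have hg'meas : AEStronglyMeasurable g' ν := (hsmg'.mono hm).aestronglyMeasurable
  -- integrability of the square of D ∘ Ψ
  have hint2ae : ∀ᵐ a ∂ν, Integrable (fun y => g y ^ 2) (κ (Ψ a)) :=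
    MeasureTheory.Integrable.condDistrib_ae (μ := ν) (X := Ψ) (Y := id)
      hΨ.aemeasurable aemeasurable_id (hg2.comp_snd_map_prodMk Ψ)
  have hcond2 := ProbabilityTheory.condExp_ae_eq_integral_condDistrib_id hΨ hg2
  have hIκ : Integrable (fun a => ∫ y, g y ^ 2 ∂(κ (Ψ a))) ν :=
    integrable_condExp.congr hcond2
  have hgDmeas : Measurable (fun p : ℝ × C(Set.Icc (0:ℝ) T, EuclideanSpace ℝ (Fin d)) =>
      D (pathEval d T hT p.2 p.1) p.1) := hDmeas.comp hΨ
  have hgD2 : Integrable (fun p => D (pathEval d T hT p.2 p.1) p.1 ^ 2) ν := by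
    refine hIκ.mono' ((hgDmeas.pow_const 2).aestronglyMeasurable) ?_
    filter_upwards [hint2ae] with a ha
    rw [Real.norm_eq_abs, abs_of_nonneg (sq_nonneg _)]
    exact sq_integral_le_integral_sq hgmeas.aestronglyMeasurable ha
  have hg'2 : Integrable (fun p => g' p ^ 2) ν := by
    refine hgD2.congr ?_
    filter_upwards [hae] with a ha
    rw [ha]
  -- integrability of products
  have hg'g_int : Integrable (g' * g) ν := by
    have hb : Integrable (fun p => (g p ^ 2 + g' p ^ 2) / 2) ν := (hg2.add hg'2).div_const 2
    refine hb.mono' (hg'meas.mul hgmeas.aestronglyMeasurable)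
      (Filter.Eventually.of_forall fun a => ?_)
    rw [Pi.mul_apply, Real.norm_eq_abs, abs_mul]
    nlinarith [sq_nonneg (|g a| - |g' a|), sq_abs (g a), sq_abs (g' a),
      abs_nonneg (g a), abs_nonneg (g' a)]
  have hggD_int : Integrable (fun p => g p * D (pathEval d T hT p.2 p.1) p.1) ν := by
    have h1 : Integrable (fun p => g' p * g p) ν := hg'g_int
    refine h1.congr ?_
    filter_upwards [hae] with a ha
    rw [ha, mul_comm]
  -- orthogonality
  have hpull := condExp_mul_of_stronglyMeasurable_left hsmg' hg'g_int hgint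
  have e2 : ∫ p, (g' * g) p ∂ν = ∫ p, g' p * g' p ∂ν := by
    rw [← integral_condExp hm (f := g' * g)]
    refine integral_congr_ae (hpull.mono fun a ha => ?_)
    rw [ha]
    rfl
  have key : ∫ p, g p * D (pathEval d T hT p.2 p.1) p.1 ∂ν
      = ∫ p, D (pathEval d T hT p.2 p.1) p.1 ^ 2 ∂ν := by
    have l1 : ∫ p, g p * D (pathEval d T hT p.2 p.1) p.1 ∂ν = ∫ p, (g' * g) p ∂ν := by
      refine integral_congr_ae ?_
      filter_upwards [hae] with a ha
      rw [Pi.mul_apply, ← ha, mul_comm]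
    have l3 : ∫ p, g' p * g' p ∂ν = ∫ p, D (pathEval d T hT p.2 p.1) p.1 ^ 2 ∂ν := by
      refine integral_congr_ae ?_
      filter_upwards [hae] with a ha
      rw [← ha]
      ring
    rw [l1, e2, l3]
  -- Pythagoras
  have hsub_eq : (fun p => (g p - D (pathEval d T hT p.2 p.1) p.1) ^ 2)
      = fun p => (g p ^ 2 - 2 * (g p * D (pathEval d T hT p.2 p.1) p.1))
        + D (pathEval d T hT p.2 p.1) p.1 ^ 2 := by
    funext p; ring
  have h2c : Integrable (fun p => 2 * (g p * D (pathEval d T hT p.2 p.1) p.1)) ν :=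
    hggD_int.const_mul 2
  have hA : Integrable (fun p =>
      g p ^ 2 - 2 * (g p * D (pathEval d T hT p.2 p.1) p.1)) ν := hg2.sub h2c
  have hsub_int : Integrable (fun p => (g p - D (pathEval d T hT p.2 p.1) p.1) ^ 2) ν := by
    rw [hsub_eq]
    exact hA.add hgD2
  have hexpand : ∫ p, (g p - D (pathEval d T hT p.2 p.1) p.1) ^ 2 ∂ν
      = (∫ p, g p ^ 2 ∂ν) - ∫ p, D (pathEval d T hT p.2 p.1) p.1 ^ 2 ∂ν := by
    rw [hsub_eq, integral_add hA hgD2, integral_sub hg2 h2c, integral_const_mul, key]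
    ring
  have h0 : 0 ≤ ∫ p, (g p - D (pathEval d T hT p.2 p.1) p.1) ^ 2 ∂ν :=
    integral_nonneg fun p => sq_nonneg _
  have hineq : ∫ p, D (pathEval d T hT p.2 p.1) p.1 ^ 2 ∂ν ≤ ∫ p, g p ^ 2 ∂ν := by
    linarith
  refine ⟨D, hDmeas, hgD2, ?_, hineq, ?_⟩
  · -- test functions
    intro f hfc hfb
    obtain ⟨C, hC⟩ := hfb
    set φ : ℝ × C(Set.Icc (0:ℝ) T, EuclideanSpace ℝ (Fin d)) → ℝ :=
      fun p => f (pathEval d T hT p.2 p.1) p.1 with hφdef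
    have hfmeas : Measurable (Function.uncurry f) := hfc.measurable
    have hφmeas : Measurable φ := hfmeas.comp hΨ
    have hΨ' : @Measurable _ _ (MeasurableSpace.comap Ψ Prod.instMeasurableSpace) _ Ψ :=
      Measurable.of_comap_le le_rfl
    have hφsm : StronglyMeasurable[MeasurableSpace.comap Ψ Prod.instMeasurableSpace] φ :=
      (hfmeas.comp hΨ').stronglyMeasurable
    have hφg_int : Integrable (φ * g) ν := by
      refine hgint.bdd_mul hφmeas.aestronglyMeasurable (c := C) (Filter.Eventually.of_forall fun x => ?_)
      rw [Real.norm_eq_abs]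
      exact hC _ _
    have hpullφ := condExp_mul_of_stronglyMeasurable_left hφsm hφg_int hgint
    calc ∫ p, D (pathEval d T hT p.2 p.1) p.1 * φ p ∂ν
        = ∫ p, g' p * φ p ∂ν := by
          refine integral_congr_ae ?_
          filter_upwards [hae] with a ha
          rw [ha]
      _ = ∫ p, (φ * g') p ∂ν := by
          refine integral_congr_ae (Filter.Eventually.of_forall fun a => ?_)
          rw [Pi.mul_apply, mul_comm]
      _ = ∫ p, (ν[φ * g|MeasurableSpace.comap Ψ Prod.instMeasurableSpace]) p ∂ν := by
          refine (integral_congr_ae (hpullφ.mono fun a ha => ?_)).symm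
          rw [ha]
      _ = ∫ p, (φ * g) p ∂ν := integral_condExp hm
      _ = ∫ p, g p * φ p ∂ν := by
          refine integral_congr_ae (Filter.Eventually.of_forall fun a => ?_)
          rw [Pi.mul_apply, mul_comm]
  · -- equality iff
    constructor
    · intro hEq
      have hzero : ∫ p, (g p - D (pathEval d T hT p.2 p.1) p.1) ^ 2 ∂ν = 0 := by
        rw [hexpand, hEq, sub_self]
      have hz := (integral_eq_zero_iff_of_nonneg (fun p => sq_nonneg _) hsub_int).1 hzero
      filter_upwards [hz] with a ha
      have h1 : (g a - D (pathEval d T hT a.2 a.1) a.1) ^ 2 = 0 := ha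
      have h2 : g a - D (pathEval d T hT a.2 a.1) a.1 = 0 := by
        exact pow_eq_zero_iff two_ne_zero |>.1 h1
      exact sub_eq_zero.1 h2
    · intro hEq
      refine integral_congr_ae ?_
      filter_upwards [hEq] with a ha
      rw [← ha]


end
end
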